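/- The only permutations p of length n ≥ 2 with exactly one distinct (n−1)-pattern are the increasing permutation 12…n and the decreasing permutation n…21. -/

import Mathlib

open Finset

/-- `del p i`: delete the `i`-th entry of `p` and relabel order-isomorphically. -/
def del {n : ℕ} (p : Equiv.Perm (Fin (n + 1))) (i : Fin (n + 1)) : Equiv.Perm (Fin n) :=
  (Tuple.sort fun j => p (i.succAbove j))⁻¹

/-- `D1 p`: the set of `(n-1)`-patterns of `p`. -/
def D1 {n : ℕ} (p : Equiv.Perm (Fin (n + 1))) : Finset (Equiv.Perm (Fin n)) :=
  Finset.univ.image (del p)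

/-- `ins q j k`: insert the value `k - 1/2` just left of position `j` and relabel. -/
def ins {n : ℕ} (q : Equiv.Perm (Fin n)) (j k : Fin (n + 1)) : Equiv.Perm (Fin (n + 1)) :=
  (finSuccEquiv' j).trans ((Equiv.optionCongr q).trans (finSuccEquiv' k).symm)

/-- `C p`: the number of bonds of `p` (adjacent positions with values differing by 1). -/
def C {n : ℕ} (p : Equiv.Perm (Fin (n + 1))) : ℕ :=
  (Finset.univ.filter fun i : Fin n =>
    Nat.dist (p i.castSucc).val (p i.succ).val = 1).card

/-- minimum gap of an injective word `f`, via the taxicab metric on (index, value). -/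
noncomputable def mgF {n : ℕ} (f : Fin n → ℕ) : ℕ :=
  sInf {m : ℕ | ∃ i j : Fin n, i < j ∧ Nat.dist i.val j.val + Nat.dist (f i) (f j) = m}

/-- minimum gap of a permutation. -/
noncomputable def mg {n : ℕ} (p : Equiv.Perm (Fin n)) : ℕ := mgF fun i => (p i).val

/-- the span of entries `p i` and `p j`: indices of entries strictly between them
horizontally or vertically. -/
def span {n : ℕ} (p : Equiv.Perm (Fin n)) (i j : Fin n) : Finset (Fin n) :=
  Finset.univ.filter fun m =>
    (i < m ∧ m < j) ∨ (min (p i) (p j) < p m ∧ p m < max (p i) (p j))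

/-- the pattern of `p` after deleting the entries at positions in `S`, encoded as the
list of (0-based) ranks of the remaining entries in positional order. -/
def patList {n : ℕ} (p : Equiv.Perm (Fin n)) (S : Finset (Fin n)) : List ℕ :=
  let l := (Sᶜ.sort (· ≤ ·)).map fun t => (p t).val
  l.map fun v => (l.filter fun w => w < v).length

/-- `Dk p k`: the set of distinct `(n-k)`-patterns of `p`. -/
def Dk {n : ℕ} (p : Equiv.Perm (Fin n)) (k : ℕ) : Finset (List ℕ) :=
  (Finset.univ.filter fun S : Finset (Fin n) => S.card = k).image (patList p)


lemma del_lt_iff {n : ℕ} (p : Equiv.Perm (Fin (n + 1))) (i : Fin (n + 1)) (j k : Fin n) :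
    del p i j < del p i k ↔ p (i.succAbove j) < p (i.succAbove k) := by
  set f : Fin n → Fin (n + 1) := fun j => p (i.succAbove j) with hf
  have hinj : Function.Injective f := fun a b h =>
    Fin.succAbove_right_injective (p.injective h)
  have hm : StrictMono (f ∘ Tuple.sort f) :=
    (Tuple.monotone_sort f).strictMono_of_injective
      (hinj.comp (Tuple.sort f).injective)
  have key : ∀ a b, f (Tuple.sort f a) < f (Tuple.sort f b) ↔ a < b := fun a b => hm.lt_iff_lt
  have : (del p i j < del p i k) = ((Tuple.sort f)⁻¹ j < (Tuple.sort f)⁻¹ k) := rfl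
  rw [this, ← key ((Tuple.sort f)⁻¹ j) ((Tuple.sort f)⁻¹ k),
    Equiv.Perm.inv_def, Equiv.apply_symm_apply, Equiv.apply_symm_apply]

lemma perm_strictMono_eq {m : ℕ} (q : Equiv.Perm (Fin m)) (h : StrictMono ⇑q) :
    q = Equiv.refl _ := by
  have hr : Set.range ⇑q = Set.range (id : Fin m → Fin m) := by
    rw [q.surjective.range_eq, Set.range_id]
  have : ⇑q = id := (h.range_inj strictMono_id).mp hr
  exact Equiv.ext fun x => congrFun this x

lemma perm_eq_of_lt_iff {m : ℕ} (q r : Equiv.Perm (Fin m))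
    (h : ∀ j k, q j < q k ↔ r j < r k) : q = r := by
  have hm : StrictMono ⇑(r.symm.trans q) := by
    intro a b hab
    simp only [Equiv.trans_apply]
    rw [h]
    simpa using hab
  have h2 := perm_strictMono_eq _ hm
  refine Equiv.ext fun x => ?_
  have h3 := congrArg (fun e : Equiv.Perm (Fin m) => e (r x)) h2
  simpa using h3

theorem stmt4 {n : ℕ} (hn : 1 ≤ n) (p : Equiv.Perm (Fin (n + 1))) :
    (D1 p).card = 1 ↔ p = Equiv.refl (Fin (n + 1)) ∨ p = Fin.revPerm := by
  constructor
  · intro hcard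
    obtain ⟨c, hc⟩ := Finset.card_eq_one.mp hcard
    have hmem : ∀ i, del p i = c := by
      intro i
      have : del p i ∈ D1 p := Finset.mem_image.mpr ⟨i, Finset.mem_univ _, rfl⟩
      rw [hc, Finset.mem_singleton] at this
      exact this
    have h0 : del p (Fin.last n) = del p 0 := (hmem _).trans (hmem _).symm
    have key : ∀ j k : Fin n, p j.castSucc < p k.castSucc ↔ p j.succ < p k.succ := by
      intro j k
      have h1 := del_lt_iff p (Fin.last n) j k
      have h2 := del_lt_iff p 0 j k
      rw [Fin.succAbove_last] at h1
      rw [Fin.succAbove_zero] at h2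
      rw [← h1, ← h2, h0]
    have chain : ∀ i : ℕ, ∀ hi : i < n,
        ((p ⟨i, by omega⟩ < p ⟨i + 1, by omega⟩) ↔
          (p ⟨0, by omega⟩ < p ⟨1, by omega⟩)) := by
      intro i
      induction i with
      | zero => intro hi; exact Iff.rfl
      | succ i ih =>
        intro hi
        have hkey := key ⟨i, by omega⟩ ⟨i + 1, by omega⟩
        simp only [Fin.castSucc_mk, Fin.succ_mk] at hkey
        exact hkey.symm.trans (ih (by omega))
    have hne : p ⟨0, by omega⟩ ≠ p ⟨1, by omega⟩ := by
      intro h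
      have := p.injective h
      simp only [Fin.mk.injEq] at this
      omega
    rcases lt_or_gt_of_ne hne with hlt | hgt
    · left
      apply perm_strictMono_eq
      apply Fin.strictMono_iff_lt_succ.mpr
      intro i
      exact (chain i.val i.isLt).mpr hlt
    · right
      have hanti : StrictAnti ⇑p := by
        apply Fin.strictAnti_iff_succ_lt.mpr
        intro i
        have hiff := chain i.val i.isLt
        have hnlt : ¬ p i.castSucc < p i.succ := fun h => absurd (hiff.mp h) (not_lt.mpr hgt.le)
        have hne2 : p i.succ ≠ p i.castSucc := by
          intro h
          have := p.injective h
          apply absurd (congrArg Fin.val this)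
          simp [Fin.val_succ]
        exact lt_of_le_of_ne (not_lt.mp hnlt) hne2
      have hm : StrictMono ⇑(Fin.revPerm.trans p) := by
        intro a b hab
        simp only [Equiv.trans_apply, Fin.revPerm_apply]
        exact hanti (Fin.rev_lt_rev.mpr hab)
      have h2 := perm_strictMono_eq _ hm
      refine Equiv.ext fun x => ?_
      have h3 := congrArg (fun e : Equiv.Perm (Fin (n + 1)) => e x.rev) h2
      simpa using h3
  · intro hp
    have hconst : ∃ c, ∀ i, del p i = c := by
      rcases hp with rfl | rfl
      · exact ⟨Equiv.refl _, fun i => perm_eq_of_lt_iff _ _ fun j k => by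
          simpa [del_lt_iff] using Fin.succAbove_lt_succAbove_iff⟩
      · refine ⟨Fin.revPerm, fun i => perm_eq_of_lt_iff _ _ fun j k => ?_⟩
        rw [del_lt_iff]
        simp only [Fin.revPerm_apply, Fin.rev_lt_rev]
        exact Fin.succAbove_lt_succAbove_iff
    obtain ⟨c, hconst⟩ := hconst
    have : D1 p = {c} := by
      apply Finset.eq_singleton_iff_unique_mem.mpr
      refine ⟨Finset.mem_image.mpr ⟨0, Finset.mem_univ _, hconst 0⟩, ?_⟩
      intro x hx
      obtain ⟨i, _, rfl⟩ := Finset.mem_image.mp hx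
      exact hconst i
    rw [this, Finset.card_singleton]
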